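/- For the cross-entropy loss: let y ∈ Δ_c with all coordinates strictly positive and α ∈ (0,1). Among one-hot vectors e_j, the function j ↦ CEL(y, (1−α)y + α e_j) = −∑_i y_i log((1−α)y_i + α[i=j]) is maximized at j ∈ argmin_i y_i. -/

import Mathlib

open Finset Real

lemma g_mono (α : ℝ) (hα : 0 < α) (hα1 : α < 1) {a b : ℝ} (ha : 0 < a) (hab : a ≤ b) :
    a * (Real.log ((1-α)*a+α) - Real.log ((1-α)*a)) ≤
    b * (Real.log ((1-α)*b+α) - Real.log ((1-α)*b)) := by
  set β := 1 - α with hβdef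
  have hβ : 0 < β := by rw [hβdef]; linarith
  set f : ℝ → ℝ := fun t => t * (Real.log (β*t+α) - Real.log (β*t)) with hf
  have hd : ∀ t ∈ Set.Ioi (0:ℝ), HasDerivAt f
      ((Real.log (β*t+α) - Real.log (β*t)) + t * (β/(β*t+α) - β/(β*t))) t := by
    intro t ht
    have ht0 : 0 < t := ht
    have h1 : 0 < β * t := by positivity
    have h2 : 0 < β * t + α := by positivity
    have d1 : HasDerivAt (fun t => Real.log (β*t+α)) (β/(β*t+α)) t := by
      have := (Real.hasDerivAt_log h2.ne').comp t
        (((hasDerivAt_id t).const_mul β).add_const α)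
      simpa [Function.comp_def, div_eq_inv_mul, mul_comm] using this
    have d2 : HasDerivAt (fun t => Real.log (β*t)) (β/(β*t)) t := by
      have h := (Real.hasDerivAt_log h1.ne').comp t ((hasDerivAt_id t).const_mul β)
      simp only [Function.comp_def, id_eq] at h
      rw [show β/(β*t) = (β*t)⁻¹ * (β*1) by ring]
      exact h
    have := (hasDerivAt_id t).mul (d1.sub d2)
    simpa [hf, mul_comm, add_comm, Pi.mul_def, Pi.sub_def] using this
  have hmono : MonotoneOn f (Set.Ioi 0) := by
    apply monotoneOn_of_deriv_nonneg (convex_Ioi 0)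
    · exact fun t ht => (hd t ht).continuousAt.continuousWithinAt
    · intro t ht
      rw [interior_Ioi] at ht
      exact (hd t ht).differentiableAt.differentiableWithinAt
    · intro t ht
      rw [interior_Ioi] at ht
      rw [(hd t ht).deriv]
      have ht0 : 0 < t := ht
      have h1 : 0 < β * t := by positivity
      have h2 : 0 < β * t + α := by positivity
      have hlog : Real.log (β*t/(β*t+α)) ≤ β*t/(β*t+α) - 1 :=
        Real.log_le_sub_one_of_pos (by positivity)
      rw [Real.log_div h1.ne' h2.ne'] at hlog
      have e1 : t * (β/(β*t+α) - β/(β*t)) = β*t/(β*t+α) - 1 := by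
        field_simp
      linarith
  exact hmono ha (lt_of_lt_of_le ha hab) hab

theorem cel_one_hot_maximized_at_least_likely_class
    (c : ℕ) (hc : 1 ≤ c) (y : Fin c → ℝ)
    (hy_pos : ∀ i, 0 < y i) (hy_sum : ∑ i, y i = 1)
    (α : ℝ) (hα : 0 < α ∧ α < 1)
    (j : Fin c) (hj : ∀ i, y j ≤ y i) :
    ∀ k : Fin c,
      -∑ i, y i * Real.log ((1 - α) * y i + if i = k then α else 0) ≤
      -∑ i, y i * Real.log ((1 - α) * y i + if i = j then α else 0) := by
  obtain ⟨hα0, hα1⟩ := hα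
  have decomp : ∀ k : Fin c,
      ∑ i, y i * Real.log ((1 - α) * y i + if i = k then α else 0)
      = (∑ i, y i * Real.log ((1 - α) * y i))
        + y k * (Real.log ((1-α)*(y k)+α) - Real.log ((1-α)*(y k))) := by
    intro k
    have : ∀ i : Fin c,
        y i * Real.log ((1 - α) * y i + if i = k then α else 0)
        = y i * Real.log ((1 - α) * y i)
          + (if i = k then y k * (Real.log ((1-α)*(y k)+α) - Real.log ((1-α)*(y k))) else 0) := by
      intro i
      by_cases h : i = k
      · subst h
        simp
        ring
      · simp [h]
    rw [Finset.sum_congr rfl (fun i _ => this i), Finset.sum_add_distrib,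
      Finset.sum_ite_eq' Finset.univ k]
    simp
  intro k
  rw [decomp k, decomp j, neg_add, neg_add, add_le_add_iff_left, neg_le_neg_iff]
  exact g_mono α hα0 hα1 (hy_pos j) (hj k)
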